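/- Let E be a finite set, (Γ_x)_{x∈E} a family of finite groups, and H a subgroup of the product group G = ∏_{x∈E} Γ_x. For S ⊆ E let H_S denote the image of H under the projection π_S : G → ∏_{x∈S} Γ_x. Then for any real b > 1, the function r(S) = log_b |H_S| satisfies submodularity: for all S, T ⊆ E, r(S) + r(T) ≥ r(S ∪ T) + r(S ∩ T). Equivalently, |H_S| · |H_T| ≥ |H_{S∪T}| · |H_{S∩T}|. -/

import Mathlib

/-- Coordinate projection of a product of groups onto the coordinates in `S`. -/
def proj {E : Type} (Γ : E → Type) [∀ x, Group (Γ x)] (S : Finset E) :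
    (∀ x, Γ x) →* (∀ x : S, Γ x) :=
  Pi.monoidHom fun i => Pi.evalMonoidHom Γ i

/-- Restriction map between coordinate products. -/
def res {E : Type} (Γ : E → Type) [∀ x, Group (Γ x)] {A B : Finset E} (h : A ⊆ B) :
    (∀ x : B, Γ x) →* (∀ x : A, Γ x) :=
  Pi.monoidHom fun i => Pi.evalMonoidHom (fun x : B => Γ x) ⟨i.1, h i.2⟩

lemma res_comp_proj {E : Type} (Γ : E → Type) [∀ x, Group (Γ x)] {A B : Finset E}
    (h : A ⊆ B) : (res Γ h).comp (proj Γ B) = proj Γ A := rfl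

lemma card_ker_mul_card_map {G B : Type*} [Group G] [Group B] (φ : G →* B)
    (K : Subgroup G) :
    Nat.card (φ.ker.subgroupOf K) * Nat.card (K.map φ) = Nat.card K := by
  rw [← Subgroup.relIndex_ker, Subgroup.relIndex, Subgroup.card_mul_index]

/-- For a subgroup `H` of a finite product of finite groups, the
function `r S = log_b |π_S(H)|` is submodular; equivalently
`|H_{S∪T}| * |H_{S∩T}| ≤ |H_S| * |H_T|`. -/
theorem stmt0 {E : Type} [Fintype E] [DecidableEq E]
    (Γ : E → Type) [∀ x, Group (Γ x)] [∀ x, Fintype (Γ x)]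
    (H : Subgroup (∀ x, Γ x)) (b : ℝ) (hb : 1 < b)
    (r : Finset E → ℝ)
    (hr : ∀ S : Finset E, r S = Real.logb b (Nat.card (Subgroup.map (proj Γ S) H)))
    (S T : Finset E) :
    r (S ∪ T) + r (S ∩ T) ≤ r S + r T ∧
    Nat.card (Subgroup.map (proj Γ (S ∪ T)) H) *
        Nat.card (Subgroup.map (proj Γ (S ∩ T)) H) ≤
      Nat.card (Subgroup.map (proj Γ S) H) * Nat.card (Subgroup.map (proj Γ T) H) := by
  classical
  set U : Finset E := S ∪ T with hU
  set V : Finset E := S ∩ T with hV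
  have hSU : S ⊆ U := Finset.subset_union_left
  have hTU : T ⊆ U := Finset.subset_union_right
  have hVT : V ⊆ T := Finset.inter_subset_right
  have hVS : V ⊆ S := Finset.inter_subset_left
  set P : Subgroup (∀ x : U, Γ x) := H.map (proj Γ U) with hP
  set Q : Subgroup (∀ x : T, Γ x) := H.map (proj Γ T) with hQ
  -- the two kernel groups
  set N : Subgroup P := ((res Γ hSU).ker.subgroupOf P) with hN
  set M : Subgroup Q := ((res Γ hVT).ker.subgroupOf Q) with hM
  have hmapS : P.map (res Γ hSU) = H.map (proj Γ S) := by
    rw [hP, Subgroup.map_map, res_comp_proj]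
  have hmapV : Q.map (res Γ hVT) = H.map (proj Γ V) := by
    rw [hQ, Subgroup.map_map, res_comp_proj]
  have keyU : Nat.card N * Nat.card (H.map (proj Γ S)) = Nat.card P := by
    rw [← hmapS]; exact card_ker_mul_card_map _ _
  have keyT : Nat.card M * Nat.card (H.map (proj Γ V)) = Nat.card Q := by
    rw [← hmapV]; exact card_ker_mul_card_map _ _
  -- injection from N to M
  have hinj : Nat.card N ≤ Nat.card M := by
    have hmapN : ∀ n : N, (res Γ hTU) (n.1 : ∀ x : U, Γ x) ∈ Q := by
      rintro ⟨⟨g, hg⟩, -⟩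
      obtain ⟨h, hh, rfl⟩ := hg
      exact ⟨h, hh, rfl⟩
    have hkerN : ∀ n : N, ⟨(res Γ hTU) (n.1 : ∀ x : U, Γ x), hmapN n⟩ ∈ M := by
      rintro ⟨⟨g, hg⟩, hker⟩
      have hker' : (res Γ hSU) g = 1 := hker
      simp only [hM, Subgroup.mem_subgroupOf, MonoidHom.mem_ker]
      funext x
      have := congrFun hker' ⟨x.1, hVS x.2⟩
      exact this
    let f : N → M := fun n => ⟨⟨(res Γ hTU) (n.1 : ∀ x : U, Γ x), hmapN n⟩, hkerN n⟩
    have hf : Function.Injective f := by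
      rintro ⟨⟨g, hg⟩, hker⟩ ⟨⟨g', hg'⟩, hker'⟩ heq
      have h1 : (res Γ hTU) g = (res Γ hTU) g' := by
        simpa [f, Subtype.ext_iff] using heq
      have h2 : (res Γ hSU) g = 1 := hker
      have h3 : (res Γ hSU) g' = 1 := hker'
      have : g = g' := by
        funext x
        rcases Finset.mem_union.mp x.2 with hx | hx
        · have e2 := congrFun h2 ⟨x.1, hx⟩
          have e3 := congrFun h3 ⟨x.1, hx⟩
          exact e2.trans e3.symm
        · exact congrFun h1 ⟨x.1, hx⟩
      simp [Subtype.ext_iff, this]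
    exact Nat.card_le_card_of_injective f hf
  -- the cardinality inequality
  have hcard : Nat.card (H.map (proj Γ U)) * Nat.card (H.map (proj Γ V)) ≤
      Nat.card (H.map (proj Γ S)) * Nat.card (H.map (proj Γ T)) := by
    calc Nat.card (H.map (proj Γ U)) * Nat.card (H.map (proj Γ V))
        = Nat.card N * Nat.card (H.map (proj Γ S)) * Nat.card (H.map (proj Γ V)) := by
          rw [keyU]
      _ ≤ Nat.card M * Nat.card (H.map (proj Γ S)) * Nat.card (H.map (proj Γ V)) := by
          exact Nat.mul_le_mul_right _ (Nat.mul_le_mul_right _ hinj)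
      _ = Nat.card (H.map (proj Γ S)) * (Nat.card M * Nat.card (H.map (proj Γ V))) := by
          ring
      _ = Nat.card (H.map (proj Γ S)) * Nat.card (H.map (proj Γ T)) := by rw [keyT]
  refine ⟨?_, hcard⟩
  -- logb part
  have hpos : ∀ W : Finset E, 0 < Nat.card (H.map (proj Γ W)) := fun W => Nat.card_pos
  rw [hr, hr, hr, hr]
  rw [← Real.logb_mul (by exact_mod_cast (hpos U).ne') (by exact_mod_cast (hpos V).ne'),
      ← Real.logb_mul (by exact_mod_cast (hpos S).ne') (by exact_mod_cast (hpos T).ne')]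
  apply Real.logb_le_logb_of_le hb (by exact_mod_cast Nat.mul_pos (hpos U) (hpos V))
  exact_mod_cast hcard
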